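/- Let L be a symmetric zero-diagonal interaction matrix with ‖|L|‖_2 < 1 and let M = (1+ε)L for ε > 0. Then for any a-Lipschitz function f on Ω = {-1,+1}^n, |E_{π_L} f − E_{π_M} f| ≤ ε ‖a‖_2 √n ‖L‖_2 / (2(1 − ‖|L|‖_2)). -/

import Mathlib

open Finset
open scoped Matrix

/-- Spin value ±1 of a Boolean coordinate. -/
noncomputable def spin (b : Bool) : ℝ := if b then 1 else -1

/-- Configuration `x` with coordinate `i` set to `+1`. -/
noncomputable def up {n : ℕ} (x : Fin n → Bool) (i : Fin n) : Fin n → Bool :=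
  Function.update x i true

/-- Configuration `x` with coordinate `i` set to `-1`. -/
noncomputable def dn {n : ℕ} (x : Fin n → Bool) (i : Fin n) : Fin n → Bool :=
  Function.update x i false

/-- Conditional probability `μ_i(1 | x^{(∼i)})`. -/
noncomputable def condProb {n : ℕ} (μ : (Fin n → Bool) → ℝ) (x : Fin n → Bool) (i : Fin n) : ℝ :=
  μ (up x i) / (μ (up x i) + μ (dn x i))

/-- Glauber dynamics kernel of `μ`, acting on functions. -/
noncomputable def glauberOp {n : ℕ} (μ : (Fin n → Bool) → ℝ) (h : (Fin n → Bool) → ℝ)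
    (x : Fin n → Bool) : ℝ :=
  (1 / n) * ∑ i, (condProb μ x i * h (up x i) + (1 - condProb μ x i) * h (dn x i))

/-- Discrete derivative `Δ_i(h)(x) = h(x^{(i,+)}) - h(x^{(i,-)})`. -/
noncomputable def disc {n : ℕ} (i : Fin n) (h : (Fin n → Bool) → ℝ) (x : Fin n → Bool) : ℝ :=
  h (up x i) - h (dn x i)

/-- The ±1 spin vector associated to a Boolean configuration. -/
noncomputable def sigmaVec {n : ℕ} (x : Fin n → Bool) : Fin n → ℝ := fun i => spin (x i)

/-- The Ising model with interaction matrix `J`: `π_J(x) ∝ exp((1/2) xᵀ J x)`. -/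
noncomputable def ising {n : ℕ} (J : Matrix (Fin n) (Fin n) ℝ) (x : Fin n → Bool) : ℝ :=
  Real.exp ((1 / 2) * (sigmaVec x ⬝ᵥ J.mulVec (sigmaVec x))) /
    ∑ y, Real.exp ((1 / 2) * (sigmaVec y ⬝ᵥ J.mulVec (sigmaVec y)))

/-- Spectral (ℓ²-operator) norm of a real square matrix. -/
noncomputable def specNorm {n : ℕ} (M : Matrix (Fin n) (Fin n) ℝ) : ℝ :=
  ‖(Matrix.toEuclideanCLM (𝕜 := ℝ) M : EuclideanSpace ℝ (Fin n) →L[ℝ] EuclideanSpace ℝ (Fin n))‖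

/-- Expectation of `f` under the probability mass function `μ`. -/
noncomputable def expect {n : ℕ} (μ : (Fin n → Bool) → ℝ) (f : (Fin n → Bool) → ℝ) : ℝ :=
  ∑ x, μ x * f x

/-- Entrywise absolute value of a matrix. -/
noncomputable def absMat {n : ℕ} (L : Matrix (Fin n) (Fin n) ℝ) : Matrix (Fin n) (Fin n) ℝ :=
  Matrix.of fun i j => |L i j|

/-! ### sfun -/

noncomputable def sfun (t : ℝ) : ℝ := Real.exp t / (Real.exp t + Real.exp (-t))

lemma sfun_eq (t : ℝ) : sfun t = (1 + Real.exp (-(2*t)))⁻¹ := by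
  unfold sfun
  rw [eq_comm, inv_eq_iff_eq_inv, eq_comm, inv_div]
  rw [div_eq_iff (by positivity)]
  rw [add_mul, one_mul, ← Real.exp_add]
  ring_nf

lemma sfun_pos (t : ℝ) : 0 < sfun t := by
  unfold sfun; positivity

lemma sfun_lt_one (t : ℝ) : sfun t < 1 := by
  unfold sfun
  rw [div_lt_one (by positivity)]
  nlinarith [Real.exp_pos (-t)]

lemma sfun_hasDeriv (t : ℝ) :
    HasDerivAt sfun (2 * Real.exp (-(2*t)) / (1 + Real.exp (-(2*t)))^2) t := by
  have h1 : HasDerivAt (fun t : ℝ => 1 + Real.exp (-(2*t))) (-2 * Real.exp (-(2*t))) t := by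
    have : HasDerivAt (fun t : ℝ => -(2*t)) (-2) t := by
      simpa using ((hasDerivAt_id t).const_mul (-2 : ℝ))
    have := this.exp.const_add (1:ℝ)
    exact this.congr_deriv (by ring)
  have h2 : HasDerivAt (fun s : ℝ => (1 + Real.exp (-(2*s)))⁻¹) _ t := h1.inv (by positivity)
  have : (fun s : ℝ => (1 + Real.exp (-(2*s)))⁻¹) = sfun := by
    ext s; rw [sfun_eq]
  rw [this] at h2
  convert h2 using 1
  rw [neg_div]
  field_simp

lemma sfun_lip (t u : ℝ) : |sfun t - sfun u| ≤ |t - u| / 2 := by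
  have key : ∀ x : ℝ, x ∈ Set.univ → ‖deriv sfun x‖ ≤ (1/2 : ℝ) := by
    intro x _
    rw [(sfun_hasDeriv x).deriv, Real.norm_eq_abs]
    have he := Real.exp_pos (-(2*x))
    rw [abs_of_nonneg (by positivity), div_le_iff₀ (by positivity)]
    nlinarith [sq_nonneg (1 - Real.exp (-(2*x)))]
  have := Convex.norm_image_sub_le_of_norm_deriv_le
    (fun x _ => (sfun_hasDeriv x).differentiableAt) key convex_univ
    (Set.mem_univ u) (Set.mem_univ t)
  rw [Real.norm_eq_abs, Real.norm_eq_abs] at this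
  calc |sfun t - sfun u| ≤ 1/2 * |t - u| := this
    _ = |t - u| / 2 := by ring

/-! ### basic up/dn lemmas -/

section updn
variable {n : ℕ}

lemma up_up (x : Fin n → Bool) (i : Fin n) : up (up x i) i = up x i := by
  simp [up, Function.update_idem]

lemma dn_up (x : Fin n → Bool) (i : Fin n) : dn (up x i) i = dn x i := by
  simp [up, dn, Function.update_idem]

lemma up_dn (x : Fin n → Bool) (i : Fin n) : up (dn x i) i = up x i := by
  simp [up, dn, Function.update_idem]

lemma dn_dn (x : Fin n → Bool) (i : Fin n) : dn (dn x i) i = dn x i := by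
  simp [dn, Function.update_idem]

lemma condProb_up (μ : (Fin n → Bool) → ℝ) (x : Fin n → Bool) (i : Fin n) :
    condProb μ (up x i) i = condProb μ x i := by
  simp [condProb, up_up, dn_up]

lemma condProb_dn (μ : (Fin n → Bool) → ℝ) (x : Fin n → Bool) (i : Fin n) :
    condProb μ (dn x i) i = condProb μ x i := by
  simp [condProb, up_dn, dn_dn]

lemma up_comm {i j : Fin n} (x : Fin n → Bool) (h : i ≠ j) :
    up (up x j) i = up (up x i) j := by
  simp [up, Function.update_comm h]

lemma up_dn_comm {i j : Fin n} (x : Fin n → Bool) (h : i ≠ j) :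
    up (dn x j) i = dn (up x i) j := by
  simp [up, dn, Function.update_comm h]

lemma dn_up_comm {i j : Fin n} (x : Fin n → Bool) (h : i ≠ j) :
    dn (up x j) i = up (dn x i) j := by
  simp [up, dn, Function.update_comm h]

lemma dn_comm {i j : Fin n} (x : Fin n → Bool) (h : i ≠ j) :
    dn (dn x j) i = dn (dn x i) j := by
  simp [dn, Function.update_comm h]

end updn

/-! ### ising basics -/

section isingSec
variable {n : ℕ}

lemma ising_pos (J : Matrix (Fin n) (Fin n) ℝ) (x : Fin n → Bool) : 0 < ising J x := by
  unfold ising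
  have : (0:ℝ) < ∑ y : Fin n → Bool,
      Real.exp ((1 / 2) * (sigmaVec y ⬝ᵥ J.mulVec (sigmaVec y))) :=
    Finset.sum_pos (fun y _ => Real.exp_pos _) ⟨x, Finset.mem_univ x⟩
  positivity

lemma ising_sum_one (J : Matrix (Fin n) (Fin n) ℝ) : ∑ x, ising J x = 1 := by
  unfold ising
  rw [← Finset.sum_div]
  apply div_self
  exact ne_of_gt (Finset.sum_pos (fun y _ => Real.exp_pos _) ⟨fun _ => true, Finset.mem_univ _⟩)

lemma sigmaVec_up (x : Fin n → Bool) (i : Fin n) :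
    sigmaVec (up x i) = Function.update (sigmaVec x) i 1 := by
  funext j
  by_cases h : j = i
  · subst h; simp [sigmaVec, up, spin]
  · simp [sigmaVec, up, spin, Function.update_of_ne h]

lemma sigmaVec_dn (x : Fin n → Bool) (i : Fin n) :
    sigmaVec (dn x i) = Function.update (sigmaVec x) i (-1) := by
  funext j
  by_cases h : j = i
  · subst h; simp [sigmaVec, dn, spin]
  · simp [sigmaVec, dn, spin, Function.update_of_ne h]

lemma quad_diff (J : Matrix (Fin n) (Fin n) ℝ) (hs : J.IsSymm) (u v : Fin n → ℝ)
    (i : Fin n) (hj : ∀ j, j ≠ i → u j = v j) :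
    u ⬝ᵥ J.mulVec u - v ⬝ᵥ J.mulVec v
      = (u i - v i) * ((J.mulVec u) i + (J.mulVec v) i) := by
  have huv : u - v = Pi.single i (u i - v i) := by
    funext j
    by_cases h : j = i
    · subst h; simp
    · simp [Pi.single_apply, h, hj j h, Pi.sub_apply]
  have e1 : u ⬝ᵥ J.mulVec u - v ⬝ᵥ J.mulVec v
      = (u - v) ⬝ᵥ J.mulVec u + v ⬝ᵥ J.mulVec (u - v) := by
    rw [sub_dotProduct, Matrix.mulVec_sub, dotProduct_sub]
    ring
  have e2 : (u - v) ⬝ᵥ J.mulVec u = (u i - v i) * (J.mulVec u) i := by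
    rw [huv]
    simp [single_dotProduct]
  have e3 : v ⬝ᵥ J.mulVec (u - v) = (u i - v i) * (J.mulVec v) i := by
    rw [Matrix.dotProduct_mulVec, ← Matrix.mulVec_transpose, hs.eq, huv]
    simp [dotProduct_single, mul_comm]
  rw [e1, e2, e3]; ring

lemma mulVec_apply_indep (J : Matrix (Fin n) (Fin n) ℝ) (hd : ∀ i, J i i = 0)
    (u v : Fin n → ℝ) (i : Fin n) (hj : ∀ j, j ≠ i → u j = v j) :
    (J.mulVec u) i = (J.mulVec v) i := by
  unfold Matrix.mulVec dotProduct
  apply Finset.sum_congr rfl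
  intro j _
  by_cases h : j = i
  · subst h; simp [hd]
  · rw [hj j h]

lemma condProb_ising (J : Matrix (Fin n) (Fin n) ℝ) (hs : J.IsSymm) (hd : ∀ i, J i i = 0)
    (x : Fin n → Bool) (i : Fin n) :
    condProb (ising J) x i = sfun ((J.mulVec (sigmaVec x)) i) := by
  set m := (J.mulVec (sigmaVec x)) i with hm
  set Z := ∑ y : Fin n → Bool, Real.exp ((1 / 2) * (sigmaVec y ⬝ᵥ J.mulVec (sigmaVec y))) with hZ
  have hZpos : 0 < Z :=
    Finset.sum_pos (fun y _ => Real.exp_pos _) ⟨fun _ => true, Finset.mem_univ _⟩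
  set Eu := (1 / 2) * (sigmaVec (up x i) ⬝ᵥ J.mulVec (sigmaVec (up x i))) with hEu
  set Ed := (1 / 2) * (sigmaVec (dn x i) ⬝ᵥ J.mulVec (sigmaVec (dn x i))) with hEd
  have hind : ∀ w : Fin n → Bool, (∀ j, j ≠ i → w j = x j) →
      (J.mulVec (sigmaVec w)) i = m :=
    fun w hw => mulVec_apply_indep J hd _ _ i (fun j hji => by simp [sigmaVec, hw j hji])
  have hup : (J.mulVec (sigmaVec (up x i))) i = m := by
    apply hind; intro j hji; simp [up, Function.update_of_ne hji]
  have hdn : (J.mulVec (sigmaVec (dn x i))) i = m := by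
    apply hind; intro j hji; simp [dn, Function.update_of_ne hji]
  have hdiff : Eu - Ed = 2 * m := by
    rw [hEu, hEd, ← mul_sub]
    rw [quad_diff J hs _ _ i (by
      intro j hji
      rw [sigmaVec_up, sigmaVec_dn, Function.update_of_ne hji, Function.update_of_ne hji])]
    rw [hup, hdn, sigmaVec_up, sigmaVec_dn]
    simp
    ring
  have key : condProb (ising J) x i = Real.exp Eu / (Real.exp Eu + Real.exp Ed) := by
    unfold condProb ising
    rw [← hEu, ← hEd, ← hZ, div_add_div _ _ (ne_of_gt hZpos) (ne_of_gt hZpos)]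
    have h1 := Real.exp_pos Eu
    have h2 := Real.exp_pos Ed
    rw [div_div_eq_mul_div]
    rw [div_eq_div_iff (by positivity) (by positivity)]
    field_simp
  rw [key]
  have hEuEd : Eu = Ed + 2*m := by linarith
  rw [hEuEd, Real.exp_add, sfun_eq, Real.exp_neg]
  have hp := Real.exp_pos (2*m)
  have hp2 := Real.exp_pos Ed
  rw [eq_comm, inv_eq_iff_eq_inv, eq_comm, inv_div]
  rw [div_eq_iff (by positivity)]
  field_simp
end isingSec
/-! ### stationarity -/

section statSec
variable {n : ℕ}

noncomputable def flipC (x : Fin n → Bool) (i : Fin n) : Fin n → Bool :=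
  Function.update x i (!(x i))

lemma flip_invol (i : Fin n) : Function.Involutive (fun x => flipC x i) := by
  intro x
  funext j
  by_cases h : j = i
  · subst h; simp [flipC]
  · simp [flipC, Function.update_of_ne h]

lemma up_flip (x : Fin n → Bool) (i : Fin n) : up (flipC x i) i = up x i := by
  simp [up, flipC, Function.update_idem]

lemma dn_flip (x : Fin n → Bool) (i : Fin n) : dn (flipC x i) i = dn x i := by
  simp [dn, flipC, Function.update_idem]

lemma updn_cases (x : Fin n → Bool) (i : Fin n) :
    (up x i = x ∧ dn x i = flipC x i) ∨ (dn x i = x ∧ up x i = flipC x i) := by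
  cases hx : x i with
  | true =>
    left
    constructor
    · funext j; by_cases h : j = i
      · subst h; simp [up, hx]
      · simp [up, Function.update_of_ne h]
    · funext j; by_cases h : j = i
      · subst h; simp [dn, flipC, hx]
      · simp [dn, flipC, Function.update_of_ne h]
  | false =>
    right
    constructor
    · funext j; by_cases h : j = i
      · subst h; simp [dn, hx]
      · simp [dn, Function.update_of_ne h]
    · funext j; by_cases h : j = i
      · subst h; simp [up, flipC, hx]
      · simp [up, flipC, Function.update_of_ne h]

lemma stationary_coord (μ : (Fin n → Bool) → ℝ) (hpos : ∀ x, 0 < μ x)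
    (h : (Fin n → Bool) → ℝ) (i : Fin n) :
    ∑ x, μ x * (condProb μ x i * h (up x i) + (1 - condProb μ x i) * h (dn x i))
      = ∑ x, μ x * h x := by
  set g : (Fin n → Bool) → ℝ :=
    fun x => condProb μ x i * h (up x i) + (1 - condProb μ x i) * h (dn x i) with hg
  have hgflip : ∀ x, g (flipC x i) = g x := by
    intro x
    simp only [hg]
    rw [up_flip, dn_flip]
    congr 2 <;> · simp [condProb, up_flip, dn_flip]
  set T : Equiv.Perm (Fin n → Bool) :=
    Function.Involutive.toPerm (fun x => flipC x i) (flip_invol (n := n) i) with hTdef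
  have hT : ∀ x, T x = flipC x i := fun x => rfl
  have step1 : ∑ x, μ x * g x = ∑ x, μ (flipC x i) * g x := by
    rw [← Equiv.sum_comp T (fun x => μ x * g x)]
    apply Finset.sum_congr rfl
    intro x _
    rw [hT, hgflip]
  have step2 : (2:ℝ) * ∑ x, μ x * g x = ∑ x, (μ (up x i) + μ (dn x i)) * g x := by
    rw [two_mul]
    nth_rewrite 2 [step1]
    rw [← Finset.sum_add_distrib]
    apply Finset.sum_congr rfl
    intro x _
    rcases updn_cases x i with ⟨h1, h2⟩ | ⟨h1, h2⟩ <;> rw [h1, h2] <;> ring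
  have step3 : ∀ x, (μ (up x i) + μ (dn x i)) * g x
      = μ (up x i) * h (up x i) + μ (dn x i) * h (dn x i) := by
    intro x
    have hu := hpos (up x i)
    have hd := hpos (dn x i)
    simp only [hg, condProb]
    field_simp
    ring
  have step4 : ∑ x, (μ (up x i) * h (up x i) + μ (dn x i) * h (dn x i))
      = (2:ℝ) * ∑ x, μ x * h x := by
    have e1 : ∀ x : Fin n → Bool, μ (up x i) * h (up x i) + μ (dn x i) * h (dn x i)
        = μ x * h x + μ (flipC x i) * h (flipC x i) := by
      intro x
      rcases updn_cases x i with ⟨h1, h2⟩ | ⟨h1, h2⟩ <;> rw [h1, h2] <;> ring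
    rw [Finset.sum_congr rfl (fun x _ => e1 x), Finset.sum_add_distrib, two_mul]
    congr 1
    rw [← Equiv.sum_comp T (fun x => μ x * h x)]
    apply Finset.sum_congr rfl
    intro x _
    rw [hT]
  have := step2
  rw [Finset.sum_congr rfl (fun x _ => step3 x), step4] at this
  linarith

lemma stationary (hn : 0 < n) (μ : (Fin n → Bool) → ℝ) (hpos : ∀ x, 0 < μ x)
    (h : (Fin n → Bool) → ℝ) :
    _root_.expect μ (glauberOp μ h) = _root_.expect μ h := by
  unfold _root_.expect glauberOp
  have swap : ∑ x, μ x * ((1 / (n:ℝ)) * ∑ i,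
      (condProb μ x i * h (up x i) + (1 - condProb μ x i) * h (dn x i)))
      = ∑ i, (1 / (n:ℝ)) * ∑ x, μ x *
      (condProb μ x i * h (up x i) + (1 - condProb μ x i) * h (dn x i)) := by
    rw [show (∑ x, μ x * ((1 / (n:ℝ)) * ∑ i,
        (condProb μ x i * h (up x i) + (1 - condProb μ x i) * h (dn x i))))
        = ∑ x, ∑ i, (1 / (n:ℝ)) * (μ x *
        (condProb μ x i * h (up x i) + (1 - condProb μ x i) * h (dn x i))) from
      Finset.sum_congr rfl (fun x _ => by
        rw [Finset.mul_sum, Finset.mul_sum]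
        exact Finset.sum_congr rfl (fun i _ => by ring))]
    rw [Finset.sum_comm]
    exact Finset.sum_congr rfl (fun i _ => by rw [Finset.mul_sum])
  rw [swap]
  have hsum : (∑ i : Fin n, (1 / (n:ℝ)) * ∑ x, μ x *
      (condProb μ x i * h (up x i) + (1 - condProb μ x i) * h (dn x i)))
      = ∑ _i : Fin n, (1 / (n:ℝ)) * ∑ x, μ x * h x :=
    Finset.sum_congr rfl (fun i _ => by rw [stationary_coord μ hpos h i])
  rw [hsum, Finset.sum_const, Finset.card_univ, Fintype.card_fin, nsmul_eq_mul]
  have hne : (n:ℝ) ≠ 0 := by exact_mod_cast hn.ne'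
  field_simp
end statSec
/-! ### contraction -/

section contrSec
variable {n : ℕ}

lemma condProb_ising_mem (J : Matrix (Fin n) (Fin n) ℝ) (hs : J.IsSymm) (hd : ∀ i, J i i = 0)
    (x : Fin n → Bool) (i : Fin n) :
    0 ≤ condProb (ising J) x i ∧ condProb (ising J) x i ≤ 1 := by
  rw [condProb_ising J hs hd]
  exact ⟨(sfun_pos _).le, (sfun_lt_one _).le⟩

lemma mulVec_up_dn_diff (J : Matrix (Fin n) (Fin n) ℝ) (x : Fin n → Bool) (i j : Fin n) :
    (J.mulVec (sigmaVec (up x j))) i - (J.mulVec (sigmaVec (dn x j))) i = 2 * J i j := by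
  have hsub : sigmaVec (up x j) - sigmaVec (dn x j) = Pi.single j 2 := by
    funext k
    by_cases h : k = j
    · subst h
      rw [Pi.sub_apply, sigmaVec_up, sigmaVec_dn, Function.update_self, Function.update_self,
        Pi.single_eq_same]
      norm_num
    · rw [Pi.sub_apply, sigmaVec_up, sigmaVec_dn, Function.update_of_ne h,
        Function.update_of_ne h, Pi.single_eq_of_ne h]
      ring
  have h2 : J.mulVec (sigmaVec (up x j)) - J.mulVec (sigmaVec (dn x j)) = J.mulVec (Pi.single j 2) := by
    rw [← Matrix.mulVec_sub, hsub]
  have h3 : (J.mulVec (sigmaVec (up x j)) - J.mulVec (sigmaVec (dn x j))) i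
      = (J.mulVec (Pi.single j 2)) i := by rw [h2]
  rw [Pi.sub_apply] at h3
  rw [h3]
  unfold Matrix.mulVec dotProduct
  rw [Finset.sum_eq_single j]
  · rw [Pi.single_eq_same]; ring
  · intro k _ hk; rw [Pi.single_eq_of_ne hk]; ring
  · intro hj; exact absurd (Finset.mem_univ j) hj

lemma condProb_diff_bound (J : Matrix (Fin n) (Fin n) ℝ) (hs : J.IsSymm) (hd : ∀ i, J i i = 0)
    (x : Fin n → Bool) (i j : Fin n) :
    |condProb (ising J) (up x j) i - condProb (ising J) (dn x j) i| ≤ |J i j| := by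
  rw [condProb_ising J hs hd, condProb_ising J hs hd]
  calc |sfun ((J.mulVec (sigmaVec (up x j))) i) - sfun ((J.mulVec (sigmaVec (dn x j))) i)|
      ≤ |(J.mulVec (sigmaVec (up x j))) i - (J.mulVec (sigmaVec (dn x j))) i| / 2 := sfun_lip _ _
    _ = |2 * J i j| / 2 := by rw [mulVec_up_dn_diff]
    _ ≤ |J i j| := by rw [abs_mul, abs_two]; linarith [abs_nonneg (J i j)]

lemma contraction (hn : 0 < n) (J : Matrix (Fin n) (Fin n) ℝ)
    (hs : J.IsSymm) (hd : ∀ i, J i i = 0)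
    (g : (Fin n → Bool) → ℝ) (b : Fin n → ℝ)
    (hD : ∀ x i, |disc i g x| ≤ b i) (x : Fin n → Bool) (j : Fin n) :
    |disc j (glauberOp (ising J) g) x|
      ≤ (1 - 1/(n:ℝ)) * b j + (1/(n:ℝ)) * ∑ i, |J i j| * b i := by
  set μ := ising J with hμ
  set u := up x j with hu
  set d := dn x j with hdd
  have hbj : 0 ≤ b j := le_trans (abs_nonneg _) (hD x j)
  have expand : disc j (glauberOp μ g) x = (1/(n:ℝ)) * ∑ i,
      ((condProb μ u i * g (up u i) + (1 - condProb μ u i) * g (dn u i))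
        - (condProb μ d i * g (up d i) + (1 - condProb μ d i) * g (dn d i))) := by
    unfold disc glauberOp
    rw [← hu, ← hdd, ← mul_sub, ← Finset.sum_sub_distrib]
  have termbound : ∀ i : Fin n,
      |(condProb μ u i * g (up u i) + (1 - condProb μ u i) * g (dn u i))
        - (condProb μ d i * g (up d i) + (1 - condProb μ d i) * g (dn d i))|
      ≤ (if i = j then 0 else b j) + |J i j| * b i := by
    intro i
    by_cases hij : i = j
    · subst hij
      rw [if_pos rfl, hu, hdd, condProb_up, condProb_dn, up_up, up_dn, dn_up, dn_dn,
        sub_self, abs_zero]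
      have : 0 ≤ |J i i| * b i := by rw [hd i, abs_zero, zero_mul]
      linarith
    · rw [if_neg hij]
      have hcu := condProb_ising_mem J hs hd u i
      have key : (condProb μ u i * g (up u i) + (1 - condProb μ u i) * g (dn u i))
          - (condProb μ d i * g (up d i) + (1 - condProb μ d i) * g (dn d i))
          = condProb μ u i * disc j g (up x i) + (1 - condProb μ u i) * disc j g (dn x i)
            + (condProb μ u i - condProb μ d i) * disc i g d := by
        unfold disc
        rw [hu, hdd, up_comm x hij, up_dn_comm x hij, dn_up_comm x hij, dn_comm x hij]
        ring
      rw [key]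
      have h1 : |condProb μ u i * disc j g (up x i)| ≤ condProb μ u i * b j := by
        rw [abs_mul, abs_of_nonneg hcu.1]
        exact mul_le_mul_of_nonneg_left (hD _ j) hcu.1
      have h2 : |(1 - condProb μ u i) * disc j g (dn x i)| ≤ (1 - condProb μ u i) * b j := by
        rw [abs_mul, abs_of_nonneg (by linarith [hcu.2])]
        exact mul_le_mul_of_nonneg_left (hD _ j) (by linarith [hcu.2])
      have h3 : |(condProb μ u i - condProb μ d i) * disc i g d| ≤ |J i j| * b i := by
        rw [abs_mul]
        exact mul_le_mul (hdd ▸ hu ▸ condProb_diff_bound J hs hd x i j) (hD d i)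
          (abs_nonneg _) (abs_nonneg _)
      calc |condProb μ u i * disc j g (up x i) + (1 - condProb μ u i) * disc j g (dn x i)
            + (condProb μ u i - condProb μ d i) * disc i g d|
          ≤ |condProb μ u i * disc j g (up x i)| + |(1 - condProb μ u i) * disc j g (dn x i)|
            + |(condProb μ u i - condProb μ d i) * disc i g d| := abs_add_three _ _ _
        _ ≤ condProb μ u i * b j + (1 - condProb μ u i) * b j + |J i j| * b i := by
            linarith
        _ = b j + |J i j| * b i := by ring
  have sumbound : |∑ i, ((condProb μ u i * g (up u i) + (1 - condProb μ u i) * g (dn u i))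
        - (condProb μ d i * g (up d i) + (1 - condProb μ d i) * g (dn d i)))|
      ≤ ((n:ℝ) - 1) * b j + ∑ i, |J i j| * b i := by
    calc _ ≤ ∑ i, |(condProb μ u i * g (up u i) + (1 - condProb μ u i) * g (dn u i))
        - (condProb μ d i * g (up d i) + (1 - condProb μ d i) * g (dn d i))| :=
          Finset.abs_sum_le_sum_abs _ _
      _ ≤ ∑ i, ((if i = j then 0 else b j) + |J i j| * b i) :=
          Finset.sum_le_sum (fun i _ => termbound i)
      _ = ((n:ℝ) - 1) * b j + ∑ i, |J i j| * b i := by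
          rw [Finset.sum_add_distrib]
          congr 1
          have e : ∀ i : Fin n, (if i = j then (0:ℝ) else b j)
              = b j - (if i = j then b j else 0) := by intro i; split <;> ring
          rw [Finset.sum_congr rfl (fun i _ => e i), Finset.sum_sub_distrib,
            Finset.sum_const, Finset.sum_ite_eq' Finset.univ j (fun _ => b j),
            if_pos (Finset.mem_univ j), Finset.card_univ, Fintype.card_fin, nsmul_eq_mul]
          ring
  have hnne : (n:ℝ) ≠ 0 := by exact_mod_cast hn.ne'
  rw [expand, abs_mul, abs_of_nonneg (by positivity : (0:ℝ) ≤ 1/(n:ℝ))]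
  calc (1/(n:ℝ)) * |∑ i, ((condProb μ u i * g (up u i) + (1 - condProb μ u i) * g (dn u i))
        - (condProb μ d i * g (up d i) + (1 - condProb μ d i) * g (dn d i)))|
      ≤ (1/(n:ℝ)) * (((n:ℝ) - 1) * b j + ∑ i, |J i j| * b i) :=
        mul_le_mul_of_nonneg_left sumbound (by positivity)
    _ = (1 - 1/(n:ℝ)) * b j + (1/(n:ℝ)) * ∑ i, |J i j| * b i := by
        field_simp

end contrSec
/-! ### kernel difference and Lipschitz lemmas -/

section kdSec
variable {n : ℕ}

lemma smul_isSymm (c : ℝ) (L : Matrix (Fin n) (Fin n) ℝ) (hs : L.IsSymm) :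
    (c • L).IsSymm := by
  unfold Matrix.IsSymm
  rw [Matrix.transpose_smul, hs.eq]

lemma kernel_diff (hn : 0 < n) (L : Matrix (Fin n) (Fin n) ℝ)
    (hs : L.IsSymm) (hd : ∀ i, L i i = 0) (ε : ℝ) (hε : 0 < ε)
    (g : (Fin n → Bool) → ℝ) (b : Fin n → ℝ)
    (hD : ∀ x i, |disc i g x| ≤ b i) (x : Fin n → Bool) :
    |glauberOp (ising L) g x - glauberOp (ising ((1 + ε) • L)) g x|
      ≤ (1/(n:ℝ)) * ∑ i, (ε/2) * |(L.mulVec (sigmaVec x)) i| * b i := by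
  have hs' : ((1 + ε) • L).IsSymm := smul_isSymm _ L hs
  have hd' : ∀ i, ((1 + ε) • L) i i = 0 := by
    intro i; rw [Matrix.smul_apply, hd i, smul_zero]
  have expand : glauberOp (ising L) g x - glauberOp (ising ((1 + ε) • L)) g x
      = (1/(n:ℝ)) * ∑ i, (condProb (ising L) x i - condProb (ising ((1 + ε) • L)) x i)
          * disc i g x := by
    unfold glauberOp disc
    rw [← mul_sub, ← Finset.sum_sub_distrib]
    congr 1
    apply Finset.sum_congr rfl
    intro i _
    ring
  have termbound : ∀ i : Fin n,
      |(condProb (ising L) x i - condProb (ising ((1 + ε) • L)) x i) * disc i g x|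
        ≤ (ε/2) * |(L.mulVec (sigmaVec x)) i| * b i := by
    intro i
    rw [abs_mul]
    have hc : |condProb (ising L) x i - condProb (ising ((1 + ε) • L)) x i|
        ≤ (ε/2) * |(L.mulVec (sigmaVec x)) i| := by
      rw [condProb_ising L hs hd, condProb_ising _ hs' hd']
      have hmv : (((1 + ε) • L).mulVec (sigmaVec x)) i
          = (1 + ε) * ((L.mulVec (sigmaVec x)) i) := by
        rw [Matrix.smul_mulVec]
        simp
      rw [hmv]
      calc |sfun ((L.mulVec (sigmaVec x)) i) - sfun ((1 + ε) * ((L.mulVec (sigmaVec x)) i))|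
          ≤ |(L.mulVec (sigmaVec x)) i - (1 + ε) * ((L.mulVec (sigmaVec x)) i)| / 2 :=
            sfun_lip _ _
        _ = (ε/2) * |(L.mulVec (sigmaVec x)) i| := by
            rw [show (L.mulVec (sigmaVec x)) i - (1 + ε) * ((L.mulVec (sigmaVec x)) i)
              = -(ε * ((L.mulVec (sigmaVec x)) i)) by ring, abs_neg, abs_mul,
              abs_of_pos hε]
            ring
    calc |condProb (ising L) x i - condProb (ising ((1 + ε) • L)) x i| * |disc i g x|
        ≤ ((ε/2) * |(L.mulVec (sigmaVec x)) i|) * b i :=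
          mul_le_mul hc (hD x i) (abs_nonneg _) (by positivity)
      _ = (ε/2) * |(L.mulVec (sigmaVec x)) i| * b i := by ring
  rw [expand, abs_mul, abs_of_nonneg (by positivity : (0:ℝ) ≤ 1/(n:ℝ))]
  apply mul_le_mul_of_nonneg_left _ (by positivity : (0:ℝ) ≤ 1/(n:ℝ))
  exact (Finset.abs_sum_le_sum_abs _ _).trans (Finset.sum_le_sum (fun i _ => termbound i))

lemma lip_of_disc (g : (Fin n → Bool) → ℝ) (b : Fin n → ℝ) (hb : ∀ i, 0 ≤ b i)
    (hD : ∀ x i, |disc i g x| ≤ b i) (x y : Fin n → Bool) :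
    |g x - g y| ≤ ∑ i, b i := by
  have main : ∀ s : Finset (Fin n), ∀ x : Fin n → Bool,
      (∀ j, j ∉ s → x j = y j) → |g x - g y| ≤ ∑ i ∈ s, b i := by
    intro s
    induction s using Finset.induction_on with
    | empty =>
      intro x hx
      have : x = y := funext (fun j => hx j (Finset.notMem_empty j))
      rw [this, sub_self, abs_zero, Finset.sum_empty]
    | @insert i s his ih =>
      intro x hx
      set x' := Function.update x i (y i) with hx'
      have hstep : |g x - g x'| ≤ b i := by
        by_cases hxy : x i = y i
        · have : x' = x := by rw [hx', ← hxy, Function.update_eq_self]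
          rw [this, sub_self, abs_zero]; exact hb i
        · cases hxi : x i with
          | true =>
            have hyi : y i = false := by
              cases hyi : y i
              · rfl
              · exact absurd (hxi.trans hyi.symm) hxy
            have e1 : x = up x i := by
              funext j
              by_cases h : j = i
              · subst h; rw [hxi]; simp [up]
              · simp [up, Function.update_of_ne h]
            have e2 : x' = dn x i := by rw [hx', hyi]; rfl
            calc |g x - g x'| = |disc i g x| := by
                  rw [e2]; nth_rewrite 1 [e1]; rfl
              _ ≤ b i := hD x i
          | false =>
            have hyi : y i = true := by
              cases hyi : y i
              · exact absurd (hxi.trans hyi.symm) hxy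
              · rfl
            have e1 : x = dn x i := by
              funext j
              by_cases h : j = i
              · subst h; rw [hxi]; simp [dn]
              · simp [dn, Function.update_of_ne h]
            have e2 : x' = up x i := by rw [hx', hyi]; rfl
            calc |g x - g x'| = |disc i g x| := by
                  rw [e2]; nth_rewrite 1 [e1]
                  unfold disc
                  exact abs_sub_comm _ _
              _ ≤ b i := hD x i
      have hx's : ∀ j, j ∉ s → x' j = y j := by
        intro j hj
        by_cases h : j = i
        · subst h; rw [hx', Function.update_self]
        · rw [hx', Function.update_of_ne h]
          exact hx j (by simp [Finset.mem_insert, h, hj])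
      calc |g x - g y| = |(g x - g x') + (g x' - g y)| := by ring_nf
        _ ≤ |g x - g x'| + |g x' - g y| := abs_add_le _ _
        _ ≤ b i + ∑ j ∈ s, b j := add_le_add hstep (ih x' hx's)
        _ = ∑ j ∈ insert i s, b j := (Finset.sum_insert his).symm
  exact (main Finset.univ x (fun j hj => absurd (Finset.mem_univ j) hj)).trans
    (le_of_eq rfl)

lemma expect_abs_le (μ : (Fin n → Bool) → ℝ) (hpos : ∀ x, 0 ≤ μ x) (hsum : ∑ x, μ x = 1)
    (h : (Fin n → Bool) → ℝ) (C : ℝ) (hC : ∀ x, |h x| ≤ C) :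
    |expect μ h| ≤ C := by
  unfold _root_.expect
  calc |∑ x, μ x * h x| ≤ ∑ x, |μ x * h x| := Finset.abs_sum_le_sum_abs _ _
    _ ≤ ∑ x, μ x * C := Finset.sum_le_sum (fun x _ => by
        rw [abs_mul, abs_of_nonneg (hpos x)]
        exact mul_le_mul_of_nonneg_left (hC x) (hpos x))
    _ = C := by rw [← Finset.sum_mul, hsum, one_mul]

lemma expect_diff_le (μ ν : (Fin n → Bool) → ℝ)
    (hμ : ∀ x, 0 ≤ μ x) (hμ1 : ∑ x, μ x = 1)
    (hν : ∀ x, 0 ≤ ν x) (hν1 : ∑ x, ν x = 1)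
    (g : (Fin n → Bool) → ℝ) (C : ℝ) (hg : ∀ x y, |g x - g y| ≤ C) :
    |expect μ g - expect ν g| ≤ C := by
  unfold _root_.expect
  have e1 : ∑ x, μ x * g x - ∑ x, ν x * g x
      = ∑ x, ∑ y, (μ x * ν y) * (g x - g y) := by
    have l1 : ∑ x, μ x * g x = ∑ x, ∑ y, (μ x * ν y) * g x := by
      apply Finset.sum_congr rfl
      intro x _
      rw [show ∑ y, (μ x * ν y) * g x = (∑ y, ν y) * (μ x * g x) by
        rw [Finset.sum_mul]; apply Finset.sum_congr rfl; intro y _; ring]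
      rw [hν1, one_mul]
    have l2 : ∑ x, ν x * g x = ∑ x, ∑ y, (μ x * ν y) * g y := by
      rw [Finset.sum_comm]
      apply Finset.sum_congr rfl
      intro y _
      rw [show ∑ x, (μ x * ν y) * g y = (∑ x, μ x) * (ν y * g y) by
        rw [Finset.sum_mul]; apply Finset.sum_congr rfl; intro x _; ring]
      rw [hμ1, one_mul]
    rw [l1, l2, ← Finset.sum_sub_distrib]
    apply Finset.sum_congr rfl
    intro x _
    rw [← Finset.sum_sub_distrib]
    apply Finset.sum_congr rfl
    intro y _
    ring
  rw [e1]
  calc |∑ x, ∑ y, (μ x * ν y) * (g x - g y)|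
      ≤ ∑ x, |∑ y, (μ x * ν y) * (g x - g y)| := Finset.abs_sum_le_sum_abs _ _
    _ ≤ ∑ x, ∑ y, |(μ x * ν y) * (g x - g y)| :=
        Finset.sum_le_sum (fun x _ => Finset.abs_sum_le_sum_abs _ _)
    _ ≤ ∑ x, ∑ y, (μ x * ν y) * C :=
        Finset.sum_le_sum (fun x _ => Finset.sum_le_sum (fun y _ => by
          rw [abs_mul, abs_of_nonneg (mul_nonneg (hμ x) (hν y))]
          exact mul_le_mul_of_nonneg_left (hg x y) (mul_nonneg (hμ x) (hν y))))
    _ = C := by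
        have inner : ∀ x : Fin n → Bool, ∑ y, (μ x * ν y) * C = μ x * C := by
          intro x
          rw [show ∑ y, (μ x * ν y) * C = (∑ y, ν y) * (μ x * C) by
            rw [Finset.sum_mul]; apply Finset.sum_congr rfl; intro y _; ring]
          rw [hν1, one_mul]
        rw [Finset.sum_congr rfl (fun x _ => inner x), ← Finset.sum_mul, hμ1, one_mul]

end kdSec
/-! ### norm lemmas -/

section normSec
variable {n : ℕ}

noncomputable def eNorm (v : Fin n → ℝ) : ℝ := Real.sqrt (∑ i, v i ^ 2)

lemma eNorm_nonneg (v : Fin n → ℝ) : 0 ≤ eNorm v := Real.sqrt_nonneg _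

lemma eNorm_eq_norm (v : Fin n → ℝ) :
    eNorm v = ‖(WithLp.equiv 2 (Fin n → ℝ)).symm v‖ := by
  rw [EuclideanSpace.norm_eq]
  unfold eNorm
  congr 1
  apply Finset.sum_congr rfl
  intro i _
  rw [WithLp.equiv_symm_apply, PiLp.toLp_apply, Real.norm_eq_abs, sq_abs]

lemma eNorm_mulVec_le (M : Matrix (Fin n) (Fin n) ℝ) (v : Fin n → ℝ) :
    eNorm (M.mulVec v) ≤ specNorm M * eNorm v := by
  rw [eNorm_eq_norm, eNorm_eq_norm]
  have key : (WithLp.equiv 2 (Fin n → ℝ)).symm (M.mulVec v)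
      = (Matrix.toEuclideanCLM (𝕜 := ℝ) M) ((WithLp.equiv 2 (Fin n → ℝ)).symm v) := by
    exact (Matrix.toEuclideanCLM_toLp M v).symm
  rw [key]
  exact ContinuousLinearMap.le_opNorm _ _

lemma cauchy_schwarz_sum (u v : Fin n → ℝ) :
    ∑ i, u i * v i ≤ eNorm u * eNorm v := by
  have h := Finset.sum_mul_sq_le_sq_mul_sq Finset.univ u v
  have h2 : |∑ i, u i * v i| ≤ eNorm u * eNorm v := by
    rw [← Real.sqrt_sq_eq_abs]
    unfold eNorm
    rw [← Real.sqrt_mul (by positivity)]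
    exact Real.sqrt_le_sqrt h
  exact (le_abs_self _).trans h2

lemma eNorm_sigmaVec (x : Fin n → Bool) : eNorm (sigmaVec x) = Real.sqrt n := by
  unfold eNorm
  congr 1
  have : ∀ i : Fin n, (sigmaVec x i) ^ 2 = 1 := by
    intro i
    unfold sigmaVec spin
    cases x i <;> simp
  rw [Finset.sum_congr rfl (fun i _ => this i), Finset.sum_const, Finset.card_univ,
    Fintype.card_fin, nsmul_eq_mul, mul_one]

lemma specNorm_nonneg (M : Matrix (Fin n) (Fin n) ℝ) : 0 ≤ specNorm M := norm_nonneg _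

set_option synthInstance.maxHeartbeats 800000 in
set_option maxHeartbeats 1600000 in
lemma specNorm_combo_le (hn : 0 < n) (B : Matrix (Fin n) (Fin n) ℝ) (c c' : ℝ)
    (hc : 0 ≤ c) (hc' : 0 ≤ c') :
    specNorm (c • (1 : Matrix (Fin n) (Fin n) ℝ) + c' • B) ≤ c + c' * specNorm B := by
  unfold specNorm
  rw [map_add, map_smul, map_smul, map_one]
  calc ‖c • (1 : EuclideanSpace ℝ (Fin n) →L[ℝ] EuclideanSpace ℝ (Fin n))
        + c' • (Matrix.toEuclideanCLM (𝕜 := ℝ) B)‖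
      ≤ ‖c • (1 : EuclideanSpace ℝ (Fin n) →L[ℝ] EuclideanSpace ℝ (Fin n))‖
        + ‖c' • (Matrix.toEuclideanCLM (𝕜 := ℝ) B)‖ := norm_add_le _ _
    _ ≤ c + c' * specNorm B := by
        have e1 : ‖c • (1 : EuclideanSpace ℝ (Fin n) →L[ℝ] EuclideanSpace ℝ (Fin n))‖
            = |c| * ‖(1 : EuclideanSpace ℝ (Fin n) →L[ℝ] EuclideanSpace ℝ (Fin n))‖ :=
          norm_smul c (1 : EuclideanSpace ℝ (Fin n) →L[ℝ] EuclideanSpace ℝ (Fin n))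
        have e2 : ‖c' • (Matrix.toEuclideanCLM (𝕜 := ℝ) B)‖
            = |c'| * ‖(Matrix.toEuclideanCLM (𝕜 := ℝ) B)‖ :=
          norm_smul c' (Matrix.toEuclideanCLM (𝕜 := ℝ) B)
        rw [e1, e2, abs_of_nonneg hc, abs_of_nonneg hc']
        have h1 : ‖(1 : EuclideanSpace ℝ (Fin n) →L[ℝ] EuclideanSpace ℝ (Fin n))‖ ≤ 1 :=
          ContinuousLinearMap.norm_id_le
        have h2 : c * ‖(1 : EuclideanSpace ℝ (Fin n) →L[ℝ] EuclideanSpace ℝ (Fin n))‖ ≤ c * 1 :=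
          mul_le_mul_of_nonneg_left h1 hc
        have h3 : (0:ℝ) ≤ specNorm B := specNorm_nonneg B
        unfold specNorm at h3 ⊢
        linarith

lemma mulVec_nonneg (M : Matrix (Fin n) (Fin n) ℝ) (hM : ∀ i j, 0 ≤ M i j)
    (v : Fin n → ℝ) (hv : ∀ i, 0 ≤ v i) (i : Fin n) : 0 ≤ (M.mulVec v) i := by
  unfold Matrix.mulVec dotProduct
  exact Finset.sum_nonneg (fun j _ => mul_nonneg (hM i j) (hv j))

end normSec

/-! ### main theorem -/

set_option maxHeartbeats 2000000 in
set_option synthInstance.maxHeartbeats 400000 in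
theorem stmt7 {n : ℕ} (hn : 0 < n) (L : Matrix (Fin n) (Fin n) ℝ)
    (hLsymm : L.IsSymm) (hLdiag : ∀ i, L i i = 0)
    (hDob : specNorm (absMat L) < 1)
    (ε : ℝ) (hε : 0 < ε)
    (a : Fin n → ℝ) (ha : ∀ i, 0 < a i)
    (f : (Fin n → Bool) → ℝ)
    (hf : ∀ x y, |f x - f y| ≤ ∑ i, if x i = y i then 0 else a i) :
    |expect (ising L) f - expect (ising ((1 + ε) • L)) f|
      ≤ ε * Real.sqrt (∑ i, (a i) ^ 2) * Real.sqrt n * specNorm L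
          / (2 * (1 - specNorm (absMat L))) := by
  have hnR : (0:ℝ) < (n:ℝ) := by exact_mod_cast hn
  have hnne : (n:ℝ) ≠ 0 := ne_of_gt hnR
  have hnR1 : (1:ℝ) ≤ (n:ℝ) := by exact_mod_cast hn
  set μ := ising L with hμdef
  set ν := ising ((1 + ε) • L) with hνdef
  set δ := specNorm (absMat L) with hδdef
  have hδ0 : 0 ≤ δ := specNorm_nonneg _
  have hδ1 : δ < 1 := hDob
  set θ : ℝ := 1 - (1 - δ)/(n:ℝ) with hθdef
  have hθ0 : 0 ≤ θ := by
    rw [hθdef, sub_nonneg, div_le_one hnR]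
    linarith
  have hθ1 : θ < 1 := by
    rw [hθdef]
    have : 0 < (1 - δ)/(n:ℝ) := div_pos (by linarith) hnR
    linarith
  have hsym' : ∀ i j, L j i = L i j := by
    intro i j
    conv_lhs => rw [← hLsymm.eq]
    rfl
  set A : Matrix (Fin n) (Fin n) ℝ :=
    (1 - 1/(n:ℝ)) • (1 : Matrix (Fin n) (Fin n) ℝ) + (1/(n:ℝ)) • absMat L with hAdef
  have hc0 : (0:ℝ) ≤ 1 - 1/(n:ℝ) := by
    rw [sub_nonneg, div_le_one hnR]; exact hnR1
  have hc1 : (0:ℝ) ≤ 1/(n:ℝ) := by positivity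
  have hA_nonneg : ∀ i j, 0 ≤ A i j := by
    intro i j
    rw [hAdef]
    simp only [Matrix.add_apply, Matrix.smul_apply, Matrix.one_apply, absMat, Matrix.of_apply,
      smul_eq_mul]
    have h1 : 0 ≤ (1 - 1/(n:ℝ)) * (if i = j then (1:ℝ) else 0) := by
      split <;> [linarith; simp]
    have h2 : 0 ≤ (1/(n:ℝ)) * |L i j| := by positivity
    linarith
  have hA_mulVec : ∀ (v : Fin n → ℝ) (j : Fin n),
      (A.mulVec v) j = (1 - 1/(n:ℝ)) * v j + (1/(n:ℝ)) * ∑ i, |L i j| * v i := by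
    intro v j
    rw [hAdef, Matrix.add_mulVec, Matrix.smul_mulVec, Matrix.smul_mulVec,
      Matrix.one_mulVec]
    have e1 : ((absMat L).mulVec v) j = ∑ i, |L j i| * v i := rfl
    have e2 : ∑ i, |L j i| * v i = ∑ i, |L i j| * v i :=
      Finset.sum_congr rfl (fun i _ => by rw [hsym' i j])
    simp only [Pi.add_apply, Pi.smul_apply, smul_eq_mul]
    rw [e1, e2]
  have hspecA : specNorm A ≤ θ := by
    calc specNorm A ≤ (1 - 1/(n:ℝ)) + (1/(n:ℝ)) * δ :=
        specNorm_combo_le hn (absMat L) _ _ hc0 hc1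
      _ = θ := by rw [hθdef]; field_simp; ring
  -- iterated quantities
  set b : ℕ → (Fin n → ℝ) := fun k => (A.mulVec)^[k] a with hbdef
  set F : ℕ → ((Fin n → Bool) → ℝ) := fun k => (glauberOp μ)^[k] f with hFdef
  have hb_succ : ∀ k, b (k+1) = A.mulVec (b k) := by
    intro k
    rw [hbdef]
    exact Function.iterate_succ_apply' _ _ _
  have hF_succ : ∀ k, F (k+1) = glauberOp μ (F k) := by
    intro k
    rw [hFdef]
    exact Function.iterate_succ_apply' _ _ _
  have hb0 : b 0 = a := rfl
  have hF0 : F 0 = f := rfl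
  have hb_nonneg : ∀ k i, 0 ≤ b k i := by
    intro k
    induction k with
    | zero => intro i; rw [hb0]; exact (ha i).le
    | succ k ih =>
      intro i
      rw [hb_succ k]
      exact mulVec_nonneg A hA_nonneg (b k) ih i
  have hμpos : ∀ x, 0 < μ x := fun x => ising_pos L x
  have hνpos : ∀ x, 0 < ν x := fun x => ising_pos _ x
  have hsymm' : ((1+ε) • L).IsSymm := smul_isSymm _ L hLsymm
  have hdiag' : ∀ i, ((1+ε) • L) i i = 0 := by
    intro i; rw [Matrix.smul_apply, hLdiag i, smul_zero]
  -- discrete derivative bounds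
  have hD : ∀ k x i, |disc i (F k) x| ≤ b k i := by
    intro k
    induction k with
    | zero =>
      intro x i
      rw [hF0, hb0]
      have heq : ∑ j, (if (up x i) j = (dn x i) j then (0:ℝ) else a j) = a i := by
        rw [Finset.sum_eq_single_of_mem i (Finset.mem_univ i)]
        · rw [if_neg]
          intro hcontra
          have h1 : (up x i) i = true := by simp [up]
          have h2 : (dn x i) i = false := by simp [dn]
          rw [h1, h2] at hcontra
          exact Bool.noConfusion hcontra
        · intro j _ hji
          rw [if_pos]
          rw [show (up x i) j = x j from by simp [up, Function.update_of_ne hji],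
            show (dn x i) j = x j from by simp [dn, Function.update_of_ne hji]]
      calc |disc i f x| ≤ ∑ j, (if (up x i) j = (dn x i) j then (0:ℝ) else a j) :=
          hf (up x i) (dn x i)
        _ = a i := heq
    | succ k ih =>
      intro x j
      rw [hF_succ k, hb_succ k, hA_mulVec (b k) j]
      exact contraction hn L hLsymm hLdiag (F k) (b k) ih x j
  -- norm decay
  have hbnorm : ∀ k, eNorm (b k) ≤ θ^k * eNorm a := by
    intro k
    induction k with
    | zero => rw [hb0, pow_zero, one_mul]
    | succ k ih =>
      rw [hb_succ k]
      calc eNorm (A.mulVec (b k)) ≤ specNorm A * eNorm (b k) := eNorm_mulVec_le A (b k)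
        _ ≤ θ * (θ^k * eNorm a) := by
            apply mul_le_mul hspecA ih (eNorm_nonneg _)
            exact hθ0
        _ = θ^(k+1) * eNorm a := by ring
  -- stationarity
  have hstatμ : ∀ k, expect μ (F k) = expect μ f := by
    intro k
    induction k with
    | zero => rw [hF0]
    | succ k ih =>
      rw [hF_succ k, stationary hn μ hμpos (F k), ih]
  -- kernel difference bound
  set Cnum : ℕ → ℝ := fun k =>
    (1/(n:ℝ)) * ((ε/2) * (specNorm L * Real.sqrt n) * (θ^k * eNorm a)) with hCdef
  have hkd : ∀ k x, |glauberOp μ (F k) x - glauberOp ν (F k) x| ≤ Cnum k := by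
    intro k x
    have h1 := kernel_diff hn L hLsymm hLdiag ε hε (F k) (b k) (hD k) x
    rw [← hμdef, ← hνdef] at h1
    have h2 : ∑ i, (ε/2) * |(L.mulVec (sigmaVec x)) i| * (b k) i
        ≤ (ε/2) * (specNorm L * Real.sqrt n) * (θ^k * eNorm a) := by
      have e1 : ∑ i, (ε/2) * |(L.mulVec (sigmaVec x)) i| * (b k) i
          = (ε/2) * ∑ i, |(L.mulVec (sigmaVec x)) i| * (b k) i := by
        rw [Finset.mul_sum]
        exact Finset.sum_congr rfl (fun i _ => by ring)
      have e2 : ∑ i, |(L.mulVec (sigmaVec x)) i| * (b k) i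
          ≤ eNorm (fun i => |(L.mulVec (sigmaVec x)) i|) * eNorm (b k) :=
        cauchy_schwarz_sum _ _
      have e3 : eNorm (fun i => |(L.mulVec (sigmaVec x)) i|) = eNorm (L.mulVec (sigmaVec x)) := by
        unfold eNorm
        congr 1
        exact Finset.sum_congr rfl (fun i _ => sq_abs _)
      have e4 : eNorm (L.mulVec (sigmaVec x)) ≤ specNorm L * Real.sqrt n := by
        calc eNorm (L.mulVec (sigmaVec x)) ≤ specNorm L * eNorm (sigmaVec x) :=
            eNorm_mulVec_le L (sigmaVec x)
          _ = specNorm L * Real.sqrt n := by rw [eNorm_sigmaVec]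
      calc ∑ i, (ε/2) * |(L.mulVec (sigmaVec x)) i| * (b k) i
          = (ε/2) * ∑ i, |(L.mulVec (sigmaVec x)) i| * (b k) i := e1
        _ ≤ (ε/2) * (eNorm (fun i => |(L.mulVec (sigmaVec x)) i|) * eNorm (b k)) := by
            apply mul_le_mul_of_nonneg_left e2 (by linarith : (0:ℝ) ≤ ε/2)
        _ = (ε/2) * (eNorm (L.mulVec (sigmaVec x)) * eNorm (b k)) := by rw [e3]
        _ ≤ (ε/2) * ((specNorm L * Real.sqrt n) * (θ^k * eNorm a)) := by
            apply mul_le_mul_of_nonneg_left _ (by linarith : (0:ℝ) ≤ ε/2)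
            exact mul_le_mul e4 (hbnorm k) (eNorm_nonneg _)
              (mul_nonneg (specNorm_nonneg L) (Real.sqrt_nonneg _))
        _ = (ε/2) * (specNorm L * Real.sqrt n) * (θ^k * eNorm a) := by ring
    calc |glauberOp μ (F k) x - glauberOp ν (F k) x|
        ≤ (1/(n:ℝ)) * ∑ i, (ε/2) * |(L.mulVec (sigmaVec x)) i| * (b k) i := h1
      _ ≤ Cnum k := by
          rw [hCdef]
          exact mul_le_mul_of_nonneg_left h2 (by positivity)
  -- telescoping increments
  have hinc : ∀ k, |expect ν (F (k+1)) - expect ν (F k)| ≤ Cnum k := by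
    intro k
    have e0 : expect ν (F k) = expect ν (glauberOp ν (F k)) :=
      (stationary hn ν hνpos (F k)).symm
    have e1 : expect ν (F (k+1)) - expect ν (F k)
        = expect ν (fun x => glauberOp μ (F k) x - glauberOp ν (F k) x) := by
      rw [hF_succ k, e0]
      unfold _root_.expect
      rw [← Finset.sum_sub_distrib]
      exact Finset.sum_congr rfl (fun x _ => by ring)
    rw [e1]
    exact expect_abs_le ν (fun x => (hνpos x).le) (ising_sum_one _) _ (Cnum k) (hkd k)
  have htel : ∀ K, |expect ν (F K) - expect ν f| ≤ ∑ k ∈ Finset.range K, Cnum k := by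
    intro K
    have e1 : expect ν (F K) - expect ν f
        = ∑ k ∈ Finset.range K, (expect ν (F (k+1)) - expect ν (F k)) := by
      rw [Finset.sum_range_sub (fun k => expect ν (F k)), hF0]
    rw [e1]
    exact (Finset.abs_sum_le_sum_abs _ _).trans (Finset.sum_le_sum (fun k _ => hinc k))
  -- cross-measure bound at time K
  have hones : eNorm (fun _ : Fin n => (1:ℝ)) = Real.sqrt n := by
    unfold eNorm
    congr 1
    rw [Finset.sum_congr rfl (fun i _ => one_pow 2), Finset.sum_const, Finset.card_univ,
      Fintype.card_fin, nsmul_eq_mul, mul_one]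
  have hcross : ∀ K, |expect μ (F K) - expect ν (F K)|
      ≤ Real.sqrt n * (θ^K * eNorm a) := by
    intro K
    have hlip : ∀ x y, |F K x - F K y| ≤ ∑ i, (b K) i :=
      lip_of_disc (F K) (b K) (hb_nonneg K) (hD K)
    have hsum : ∑ i, (b K) i ≤ Real.sqrt n * (θ^K * eNorm a) := by
      calc ∑ i, (b K) i = ∑ i, (1:ℝ) * (b K) i :=
          Finset.sum_congr rfl (fun i _ => (one_mul _).symm)
        _ ≤ eNorm (fun _ : Fin n => (1:ℝ)) * eNorm (b K) := cauchy_schwarz_sum _ _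
        _ = Real.sqrt n * eNorm (b K) := by rw [hones]
        _ ≤ Real.sqrt n * (θ^K * eNorm a) :=
            mul_le_mul_of_nonneg_left (hbnorm K) (Real.sqrt_nonneg _)
    exact (expect_diff_le μ ν (fun x => (hμpos x).le) (ising_sum_one _)
      (fun x => (hνpos x).le) (ising_sum_one _) (F K) _ hlip).trans hsum
  -- per-K bound
  set R : ℝ := ε * Real.sqrt (∑ i, (a i) ^ 2) * Real.sqrt n * specNorm L
      / (2 * (1 - δ)) with hRdef
  have hgeom : ∀ K, ∑ k ∈ Finset.range K, Cnum k ≤ R := by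
    intro K
    have e1 : ∑ k ∈ Finset.range K, Cnum k
        = ((1/(n:ℝ)) * ((ε/2) * (specNorm L * Real.sqrt n) * eNorm a))
          * ∑ k ∈ Finset.range K, θ^k := by
      rw [Finset.mul_sum]
      apply Finset.sum_congr rfl
      intro k _
      rw [hCdef]
      ring
    have e2 : ∑ k ∈ Finset.range K, θ^k ≤ 1/(1-θ) := by
      rw [geom_sum_eq (ne_of_lt hθ1) K]
      rw [← neg_sub (1:ℝ) (θ^K), ← neg_sub (1:ℝ) θ, neg_div_neg_eq]
      rw [div_le_div_iff₀ (by linarith) (by linarith)]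
      have : (0:ℝ) ≤ θ^K := pow_nonneg hθ0 K
      nlinarith
    rw [e1]
    have hcoef : (0:ℝ) ≤ (1/(n:ℝ)) * ((ε/2) * (specNorm L * Real.sqrt n) * eNorm a) :=
      mul_nonneg (by positivity) (mul_nonneg (mul_nonneg (by linarith)
        (mul_nonneg (specNorm_nonneg L) (Real.sqrt_nonneg _))) (eNorm_nonneg a))
    calc ((1/(n:ℝ)) * ((ε/2) * (specNorm L * Real.sqrt n) * eNorm a))
          * ∑ k ∈ Finset.range K, θ^k
        ≤ ((1/(n:ℝ)) * ((ε/2) * (specNorm L * Real.sqrt n) * eNorm a)) * (1/(1-θ)) :=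
          mul_le_mul_of_nonneg_left e2 hcoef
      _ = R := by
          rw [hRdef, hθdef]
          have h1θ : 1 - (1 - (1-δ)/(n:ℝ)) = (1-δ)/(n:ℝ) := by ring
          rw [h1θ, one_div_div]
          have hδne : (1:ℝ) - δ ≠ 0 := by linarith
          rw [eq_div_iff (by positivity : (2:ℝ) * (1 - δ) ≠ 0)]
          unfold eNorm
          field_simp
  have hbound : ∀ K : ℕ, |expect μ f - expect ν f|
      ≤ Real.sqrt n * (θ^K * eNorm a) + R := by
    intro K
    have e1 : expect μ f - expect ν f
        = (expect μ (F K) - expect ν (F K)) + (expect ν (F K) - expect ν f) := by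
      rw [hstatμ K]; ring
    calc |expect μ f - expect ν f|
        ≤ |expect μ (F K) - expect ν (F K)| + |expect ν (F K) - expect ν f| := by
          rw [e1]; exact abs_add_le _ _
      _ ≤ Real.sqrt n * (θ^K * eNorm a) + ∑ k ∈ Finset.range K, Cnum k :=
          add_le_add (hcross K) (htel K)
      _ ≤ Real.sqrt n * (θ^K * eNorm a) + R := by
          linarith [hgeom K]
  -- take the limit K → ∞
  have hlim : Filter.Tendsto (fun K : ℕ => Real.sqrt n * (θ^K * eNorm a) + R)
      Filter.atTop (nhds R) := by
    have h0 : Filter.Tendsto (fun K : ℕ => θ^K) Filter.atTop (nhds 0) :=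
      tendsto_pow_atTop_nhds_zero_of_lt_one hθ0 hθ1
    have h1 := ((h0.mul_const (eNorm a)).const_mul (Real.sqrt (n:ℝ))).add_const R
    rw [show Real.sqrt (n:ℝ) * ((0:ℝ) * eNorm a) + R = R by ring] at h1
    exact h1
  have final : |expect μ f - expect ν f| ≤ R :=
    ge_of_tendsto hlim (Filter.Eventually.of_forall hbound)
  rw [hRdef] at final
  exact final
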